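/- Let Δ = [a, b) × [c, d) be an axis-parallel half-open rectangle in ℝ² with Lebesgue measure μ(Δ) = (b − a)(d − c) exactly equal to 2 + α. Then 1 ≤ |Δ ∩ Γ| ≤ 12, i.e., Δ contains at least one and at most twelve points of the lattice Γ. -/
import Mathlib


open Set

/-- The inverse golden ratio `α = (√5 - 1)/2`. -/
noncomputable def invGolden : ℝ := (Real.sqrt 5 - 1) / 2

/-- The rotated lattice `Γ = Aℤ²`, where `A` has rows `(1, -α)` and `(α, 1)`,
i.e. `A(n,m)ᵀ = (n - αm, αn + m)ᵀ`. -/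
def Γ : Set (ℝ × ℝ) :=
  {p | ∃ n m : ℤ, p = ((n : ℝ) - invGolden * m, invGolden * n + m)}

private lemma ig_sq : invGolden ^ 2 = 1 - invGolden := by
  have h5 : Real.sqrt 5 ^ 2 = 5 := Real.sq_sqrt (by norm_num)
  unfold invGolden; nlinarith [h5]

private lemma ig_pos : 0 < invGolden := by
  have h5 : Real.sqrt 5 ^ 2 = 5 := Real.sq_sqrt (by norm_num)
  have h0 : 0 ≤ Real.sqrt 5 := Real.sqrt_nonneg 5
  have : (2:ℝ) < Real.sqrt 5 := by nlinarith
  unfold invGolden; linarith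

private lemma ig_lt_one : invGolden < 1 := by
  have h := ig_sq
  have h0 := ig_pos
  nlinarith

def idxSet (a b c d : ℝ) : Set (ℤ × ℤ) :=
  {q | ((q.1 : ℝ) - invGolden * q.2 ∈ Ico a b) ∧ (invGolden * q.1 + q.2 ∈ Ico c d)}

lemma Ico_scale {s x lo hi : ℝ} (hs : 0 < s) (h : x ∈ Ico lo hi) :
    s * x ∈ Ico (s * lo) (s * hi) :=
  ⟨mul_le_mul_of_nonneg_left h.1 hs.le, (mul_lt_mul_iff_right₀ hs).mpr h.2⟩

lemma idx_step (a b c d : ℝ) :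
    (idxSet a b c d).encard =
      (idxSet ((1 - invGolden) * a) ((1 - invGolden) * b)
        ((2 + invGolden) * c) ((2 + invGolden) * d)).encard := by
  have hσ : (0:ℝ) < 1 - invGolden := by linarith [ig_lt_one]
  have hτ : (0:ℝ) < 2 + invGolden := by linarith [ig_pos]
  have hστ : (2 + invGolden) * (1 - invGolden) = 1 := by linear_combination (-1 : ℝ) * ig_sq
  have hinj : Function.Injective (fun q : ℤ × ℤ => (q.1 + q.2, q.1 + 2 * q.2)) := by
    rintro ⟨p, r⟩ ⟨p', r'⟩ h
    simp only [Prod.mk.injEq] at h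
    obtain ⟨h1, h2⟩ := h
    have : p = p' := by omega
    have : r = r' := by omega
    simp_all
  have himg : (fun q : ℤ × ℤ => (q.1 + q.2, q.1 + 2 * q.2)) '' idxSet a b c d =
      idxSet ((1 - invGolden) * a) ((1 - invGolden) * b)
        ((2 + invGolden) * c) ((2 + invGolden) * d) := by
    ext ⟨n, m⟩
    constructor
    · rintro ⟨⟨p, r⟩, ⟨hx, hy⟩, heq⟩
      simp only [Prod.mk.injEq] at heq
      obtain ⟨h1, h2⟩ := heq
      subst h1; subst h2
      constructor
      · have e1 : ((p + r : ℤ) : ℝ) - invGolden * ((p + 2 * r : ℤ) : ℝ) =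
            (1 - invGolden) * ((p : ℝ) - invGolden * r) := by
          push_cast; linear_combination (-(r : ℝ)) * ig_sq
        rw [show (((p+r : ℤ), (p+2*r : ℤ)) : ℤ × ℤ).1 = (p+r : ℤ) from rfl]
        rw [show (((p+r : ℤ), (p+2*r : ℤ)) : ℤ × ℤ).2 = (p+2*r : ℤ) from rfl]
        rw [e1]
        exact Ico_scale hσ hx
      · have e2 : invGolden * ((p + r : ℤ) : ℝ) + ((p + 2 * r : ℤ) : ℝ) =
            (2 + invGolden) * (invGolden * (p : ℝ) + r) := by
          push_cast; linear_combination (-(p : ℝ)) * ig_sq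
        rw [show (((p+r : ℤ), (p+2*r : ℤ)) : ℤ × ℤ).1 = (p+r : ℤ) from rfl]
        rw [show (((p+r : ℤ), (p+2*r : ℤ)) : ℤ × ℤ).2 = (p+2*r : ℤ) from rfl]
        rw [e2]
        exact Ico_scale hτ hy
    · rintro ⟨hx, hy⟩
      refine ⟨(2 * n - m, m - n), ⟨?_, ?_⟩, ?_⟩
      · have e1 : ((2 * n - m : ℤ) : ℝ) - invGolden * ((m - n : ℤ) : ℝ) =
            (2 + invGolden) * ((n : ℝ) - invGolden * m) := by
          push_cast; linear_combination ((m : ℝ)) * ig_sq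
        rw [show ((2*n - m, m - n) : ℤ × ℤ).1 = (2*n - m : ℤ) from rfl]
        rw [show ((2*n - m, m - n) : ℤ × ℤ).2 = (m - n : ℤ) from rfl]
        rw [e1]
        have := Ico_scale hτ hx
        rwa [show (2+invGolden) * ((1-invGolden)*a) = a by linear_combination (-a) * ig_sq,
          show (2+invGolden) * ((1-invGolden)*b) = b by linear_combination (-b) * ig_sq] at this
      · have e2 : invGolden * ((2 * n - m : ℤ) : ℝ) + ((m - n : ℤ) : ℝ) =
            (1 - invGolden) * (invGolden * (n : ℝ) + m) := by
          push_cast; linear_combination ((n : ℝ)) * ig_sq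
        rw [show ((2*n - m, m - n) : ℤ × ℤ).1 = (2*n - m : ℤ) from rfl]
        rw [show ((2*n - m, m - n) : ℤ × ℤ).2 = (m - n : ℤ) from rfl]
        rw [e2]
        have := Ico_scale hσ hy
        rwa [show (1-invGolden) * ((2+invGolden)*c) = c by linear_combination (-c) * ig_sq,
          show (1-invGolden) * ((2+invGolden)*d) = d by linear_combination (-d) * ig_sq] at this
      · simp only [Prod.mk.injEq]
        omega
  rw [← himg, hinj.encard_image]

/-- lattice point from integer coordinates -/
noncomputable def latPt (q : ℤ × ℤ) : ℝ × ℝ :=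
  ((q.1 : ℝ) - invGolden * q.2, invGolden * q.1 + q.2)

lemma latPt_inj : Function.Injective latPt := by
  rintro ⟨n, m⟩ ⟨n', m'⟩ h
  have h1 : (n : ℝ) - invGolden * m = (n' : ℝ) - invGolden * m' := congrArg Prod.fst h
  have h2 : invGolden * n + m = invGolden * n' + m' := congrArg Prod.snd h
  have hsq := ig_sq
  have hm : (m : ℝ) = m' := by nlinarith [h1, h2]
  have hn : (n : ℝ) = n' := by nlinarith [h1, h2, hm]
  have : n = n' := by exact_mod_cast hn
  have : m = m' := by exact_mod_cast hm
  simp_all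

lemma rect_inter_eq (a b c d : ℝ) :
    (Ico a b ×ˢ Ico c d) ∩ Γ = latPt '' idxSet a b c d := by
  ext ⟨x, y⟩
  constructor
  · rintro ⟨hmem, n, m, hp⟩
    rw [hp] at hmem ⊢
    exact ⟨(n, m), ⟨hmem.1, hmem.2⟩, rfl⟩
  · rintro ⟨⟨n, m⟩, ⟨hx, hy⟩, hp⟩
    rw [← hp]
    exact ⟨⟨hx, hy⟩, n, m, rfl⟩

lemma encard_eq_idx (a b c d : ℝ) :
    ((Ico a b ×ˢ Ico c d) ∩ Γ).encard = (idxSet a b c d).encard := by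
  rw [rect_inter_eq, latPt_inj.encard_image]

lemma idx_iter_up : ∀ (j : ℕ) (a b c d : ℝ),
    (idxSet a b c d).encard =
      (idxSet ((1 - invGolden) ^ j * a) ((1 - invGolden) ^ j * b)
        ((2 + invGolden) ^ j * c) ((2 + invGolden) ^ j * d)).encard := by
  intro j
  induction j with
  | zero => intro a b c d; norm_num
  | succ j ih =>
    intro a b c d
    rw [ih a b c d, idx_step]
    ring_nf

lemma idx_iter_down : ∀ (j : ℕ) (a b c d : ℝ),
    (idxSet a b c d).encard =
      (idxSet ((2 + invGolden) ^ j * a) ((2 + invGolden) ^ j * b)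
        ((1 - invGolden) ^ j * c) ((1 - invGolden) ^ j * d)).encard := by
  have hστ : (2 + invGolden) * (1 - invGolden) = 1 := by linear_combination (-1 : ℝ) * ig_sq
  have key1 : ∀ (j : ℕ) (x : ℝ), (1 - invGolden) * ((2 + invGolden) ^ (j+1) * x)
      = (2 + invGolden) ^ j * x := by
    intro j x
    calc (1 - invGolden) * ((2 + invGolden) ^ (j+1) * x)
        = ((2 + invGolden) * (1 - invGolden)) * ((2 + invGolden) ^ j * x) := by ring
      _ = (2 + invGolden) ^ j * x := by rw [hστ, one_mul]
  have key2 : ∀ (j : ℕ) (x : ℝ), (2 + invGolden) * ((1 - invGolden) ^ (j+1) * x)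
      = (1 - invGolden) ^ j * x := by
    intro j x
    calc (2 + invGolden) * ((1 - invGolden) ^ (j+1) * x)
        = ((2 + invGolden) * (1 - invGolden)) * ((1 - invGolden) ^ j * x) := by ring
      _ = (1 - invGolden) ^ j * x := by rw [hστ, one_mul]
  intro j
  induction j with
  | zero => intro a b c d; norm_num
  | succ j ih =>
    intro a b c d
    rw [ih a b c d,
      idx_step ((2 + invGolden) ^ (j+1) * a) ((2 + invGolden) ^ (j+1) * b)
        ((1 - invGolden) ^ (j+1) * c) ((1 - invGolden) ^ (j+1) * d),
      key1 j a, key1 j b, key2 j c, key2 j d]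

lemma core_upper (a b c d : ℝ) (h1 : 1 ≤ b - a) (h2 : b - a < 2 + invGolden)
    (harea : (b - a) * (d - c) = 2 + invGolden) :
    (idxSet a b c d).encard ≤ 12 := by
  have hA2 := ig_sq
  have hApos := ig_pos
  have hAlt1 := ig_lt_one
  have h2mA : (0:ℝ) < 2 - invGolden := by linarith
  have hτpos : (0:ℝ) < 2 + invGolden := by linarith
  have h5A : 5 * invGolden < 4 := by nlinarith
  have hwpos : (0:ℝ) < b - a := by linarith
  have hhpos : (0:ℝ) < d - c := by nlinarith
  -- bound 1 : (d-c) + A(b-a) ≤ 2 + 2A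
  have k1 : (b - a - 1) * ((2 + invGolden) - invGolden * (b - a)) ≥ 0 := by
    apply mul_nonneg (by linarith)
    nlinarith
  have hyw' : (b - a) * ((d - c) + invGolden * (b - a)) ≤ (b - a) * (2 + 2 * invGolden) := by
    nlinarith [k1]
  have hyw : (d - c) + invGolden * (b - a) ≤ 2 + 2 * invGolden :=
    le_of_mul_le_mul_left hyw' hwpos
  -- bound 2 : (b-a) + A(d-c) ≤ 2 + 2A
  have k2 : (b - a - (2 + invGolden)) * ((2 + invGolden) * (b - a) - (1 + invGolden)) ≤ 0 := by
    apply mul_nonpos_of_nonpos_of_nonneg (by linarith)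
    nlinarith
  have harea' : invGolden * ((b - a) * (d - c)) = 2 * invGolden + invGolden ^ 2 := by
    linear_combination invGolden * harea
  have igw1 : (b - a) * invGolden ^ 2 = (b - a) * (1 - invGolden) := by rw [ig_sq]
  have hxw' : (b - a) * ((b - a) + invGolden * (d - c)) ≤ (b - a) * (2 + 2 * invGolden) := by
    nlinarith [k2, harea', igw1, hτpos]
  have hxw : (b - a) + invGolden * (d - c) ≤ 2 + 2 * invGolden :=
    le_of_mul_le_mul_left hxw' hwpos
  set m₁ : ℤ := ⌊(c - invGolden * b) / (2 - invGolden)⌋ with hm₁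
  set n₁ : ℤ := ⌈(a + invGolden * c) / (2 - invGolden)⌉ with hn₁
  have hsub : idxSet a b c d ⊆
      ↑((Finset.Icc n₁ (n₁ + 2)) ×ˢ (Finset.Icc (m₁ + 1) (m₁ + 3))) := by
    rintro ⟨n, m⟩ ⟨hx, hy⟩
    obtain ⟨hx1, hx2⟩ := hx
    obtain ⟨hy1, hy2⟩ := hy
    simp only at hx1 hx2 hy1 hy2
    have key_m : (invGolden * n + m) - invGolden * ((n:ℝ) - invGolden * m)
        = (2 - invGolden) * m := by linear_combination (m:ℝ) * ig_sq
    have key_n : ((n:ℝ) - invGolden * m) + invGolden * (invGolden * n + m)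
        = (2 - invGolden) * n := by linear_combination (n:ℝ) * ig_sq
    have hml : c - invGolden * b < (2 - invGolden) * m := by
      linarith [mul_lt_mul_of_pos_left hx2 hApos, key_m]
    have hmu : (2 - invGolden) * m < d - invGolden * a := by
      linarith [mul_le_mul_of_nonneg_left hx1 hApos.le, key_m]
    have hnl : a + invGolden * c ≤ (2 - invGolden) * n := by
      linarith [mul_le_mul_of_nonneg_left hy1 hApos.le, key_n]
    have hnu : (2 - invGolden) * n < b + invGolden * d := by
      linarith [mul_lt_mul_of_pos_left hy2 hApos, key_n]
    have hm_lo : m₁ + 1 ≤ m := by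
      have : m₁ < m := Int.floor_lt.mpr ((div_lt_iff₀ h2mA).mpr (by linarith))
      omega
    have hm_hi : m ≤ m₁ + 3 := by
      have hfl : (c - invGolden * b) / (2 - invGolden) < (m₁ : ℝ) + 1 := Int.lt_floor_add_one _
      have hfl' : c - invGolden * b < ((m₁ : ℝ) + 1) * (2 - invGolden) :=
        (div_lt_iff₀ h2mA).mp hfl
      have step : (2 - invGolden) * (m : ℝ) < (2 - invGolden) * ((m₁ : ℝ) + 4) := by
        linarith [hmu, hfl', hyw, h5A]
      have hreal : (m : ℝ) < (m₁ : ℝ) + 4 := lt_of_mul_lt_mul_left step h2mA.le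
      have : m < m₁ + 4 := by exact_mod_cast hreal
      omega
    have hn_lo : n₁ ≤ n := Int.ceil_le.mpr ((div_le_iff₀ h2mA).mpr (by linarith))
    have hn_hi : n ≤ n₁ + 2 := by
      have hcl : (a + invGolden * c) / (2 - invGolden) ≤ (n₁ : ℝ) := Int.le_ceil _
      have hcl' : a + invGolden * c ≤ (n₁ : ℝ) * (2 - invGolden) := (div_le_iff₀ h2mA).mp hcl
      have step : (2 - invGolden) * (n : ℝ) < (2 - invGolden) * ((n₁ : ℝ) + 3) := by
        linarith [hnu, hcl', hxw, h5A]
      have hreal : (n : ℝ) < (n₁ : ℝ) + 3 := lt_of_mul_lt_mul_left step h2mA.le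
      have : n < n₁ + 3 := by exact_mod_cast hreal
      omega
    simp only [Finset.coe_product, Set.mem_prod, Finset.mem_coe, Finset.mem_Icc]
    exact ⟨⟨hn_lo, hn_hi⟩, hm_lo, hm_hi⟩
  have hcard : ((Finset.Icc n₁ (n₁ + 2)) ×ˢ (Finset.Icc (m₁ + 1) (m₁ + 3))).card = 9 := by
    rw [Finset.card_product]
    rw [Int.card_Icc, Int.card_Icc]
    have e1 : (n₁ + 2 + 1 - n₁) = 3 := by ring
    have e2 : (m₁ + 3 + 1 - (m₁ + 1)) = 3 := by ring
    rw [e1, e2]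
    rfl
  calc (idxSet a b c d).encard
      ≤ (↑((Finset.Icc n₁ (n₁ + 2)) ×ˢ (Finset.Icc (m₁ + 1) (m₁ + 3))) : Set (ℤ × ℤ)).encard :=
        Set.encard_mono hsub
    _ = (((Finset.Icc n₁ (n₁ + 2)) ×ˢ (Finset.Icc (m₁ + 1) (m₁ + 3))).card : ℕ∞) :=
        Set.encard_coe_eq_coe_finsetCard _
    _ ≤ 12 := by rw [hcard]; norm_num

lemma core_lower (a b c d : ℝ) (h1 : 1 ≤ b - a) (h2 : b - a < 2 + invGolden)
    (harea : (b - a) * (d - c) = 2 + invGolden) :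
    1 ≤ (idxSet a b c d).encard := by
  rw [Set.one_le_encard_iff_nonempty]
  have hA2 := ig_sq
  have hApos := ig_pos
  have hAlt1 := ig_lt_one
  have h2mA : (0:ℝ) < 2 - invGolden := by linarith
  have hwpos : (0:ℝ) < b - a := by linarith
  have hhpos : (0:ℝ) < d - c := by nlinarith
  have hh1 : 1 < d - c := by nlinarith
  set P : ℤ → Prop := fun m => invGolden * (⌈a + invGolden * (m:ℝ)⌉ : ℝ) + (m:ℝ) < c with hP
  have bdd : ∃ B : ℤ, ∀ z : ℤ, P z → z ≤ B := by
    refine ⟨⌈(c - invGolden * a) / (2 - invGolden)⌉, fun z hz => ?_⟩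
    have hce : a + invGolden * (z:ℝ) ≤ (⌈a + invGolden * (z:ℝ)⌉ : ℝ) := Int.le_ceil _
    have igz : invGolden ^ 2 * (z:ℝ) = (1 - invGolden) * (z:ℝ) := by rw [ig_sq]
    have h3 : (z:ℝ) * (2 - invGolden) < c - invGolden * a := by
      have := mul_le_mul_of_nonneg_left hce hApos.le
      simp only [hP] at hz
      nlinarith [hz, this, igz]
    have h4 : (z:ℝ) < (c - invGolden * a) / (2 - invGolden) := (lt_div_iff₀ h2mA).mpr h3
    exact le_of_lt (Int.lt_ceil.mpr h4)
  have inh : ∃ z : ℤ, P z := by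
    obtain ⟨z, hz⟩ := exists_int_lt ((c - invGolden * a - invGolden) / (2 - invGolden))
    have hz' : (z:ℝ) * (2 - invGolden) < c - invGolden * a - invGolden :=
      (lt_div_iff₀ h2mA).mp hz
    have hclt : (⌈a + invGolden * (z:ℝ)⌉ : ℝ) < a + invGolden * (z:ℝ) + 1 :=
      Int.ceil_lt_add_one _
    have igz : invGolden ^ 2 * (z:ℝ) = (1 - invGolden) * (z:ℝ) := by rw [ig_sq]
    refine ⟨z, ?_⟩
    simp only [hP]
    nlinarith [mul_lt_mul_of_pos_left hclt hApos, igz, hz']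
  obtain ⟨M, hM, hMmax⟩ := Int.exists_greatest_of_bdd bdd inh
  simp only [hP] at hM
  set e : ℤ := ⌈a + invGolden * (M:ℝ)⌉ with he
  set g : ℤ := ⌈a + invGolden * ((M:ℝ) + 1)⌉ with hg
  have hle_g : a + invGolden * ((M:ℝ) + 1) ≤ (g:ℝ) := Int.le_ceil _
  have hlt_g : (g:ℝ) < a + invGolden * ((M:ℝ) + 1) + 1 := Int.ceil_lt_add_one _
  have hle_e : a + invGolden * (M:ℝ) ≤ (e:ℝ) := Int.le_ceil _
  have hgc : c ≤ invGolden * (g:ℝ) + ((M:ℝ) + 1) := by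
    by_contra hcon
    push_neg at hcon
    have hPM1 : P (M + 1) := by
      simp only [hP]
      push_cast
      exact hcon
    have := hMmax _ hPM1
    omega
  have hge1 : g ≤ e + 1 := by
    rw [hg]
    apply Int.ceil_le.mpr
    push_cast
    linarith
  by_cases hcase : 1 + invGolden ≤ d - c
  · -- tall rectangle: use (g, M+1)
    refine ⟨⟨g, M + 1⟩, ⟨?_, ?_⟩, ?_, ?_⟩
    · show a ≤ (g:ℝ) - invGolden * ((M + 1 : ℤ) : ℝ)
      push_cast
      linarith
    · show (g:ℝ) - invGolden * ((M + 1 : ℤ) : ℝ) < b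
      push_cast
      linarith
    · show c ≤ invGolden * (g:ℝ) + ((M + 1 : ℤ) : ℝ)
      push_cast
      linarith
    · show invGolden * (g:ℝ) + ((M + 1 : ℤ) : ℝ) < d
      have hge1' : (g:ℝ) ≤ (e:ℝ) + 1 := by exact_mod_cast hge1
      have := mul_le_mul_of_nonneg_left hge1' hApos.le
      push_cast
      linarith [hM]
  · push_neg at hcase
    have hsq : (1 + invGolden) ^ 2 = 2 + invGolden := by linear_combination ig_sq
    have hwgt : 1 + invGolden < b - a := by nlinarith [harea, hcase, hhpos, hsq]
    by_cases hglt : invGolden * (g:ℝ) + ((M:ℝ) + 1) < d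
    · refine ⟨⟨g, M + 1⟩, ⟨?_, ?_⟩, ?_, ?_⟩
      · show a ≤ (g:ℝ) - invGolden * ((M + 1 : ℤ) : ℝ)
        push_cast
        linarith
      · show (g:ℝ) - invGolden * ((M + 1 : ℤ) : ℝ) < b
        push_cast
        linarith
      · show c ≤ invGolden * (g:ℝ) + ((M + 1 : ℤ) : ℝ)
        push_cast
        linarith
      · show invGolden * (g:ℝ) + ((M + 1 : ℤ) : ℝ) < d
        push_cast
        linarith
    · push_neg at hglt
      have hgtge : (e:ℝ) < (g:ℝ) := by
        have hAge : invGolden * (g:ℝ) - invGolden * (e:ℝ) > 0 := by linarith [hM, hglt, hh1]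
        nlinarith [hAge, hApos]
      have hge : g = e + 1 := by
        have : e < g := by exact_mod_cast hgtge
        omega
      have hgecast : (g:ℝ) = (e:ℝ) + 1 := by exact_mod_cast hge
      refine ⟨⟨e + 1, M⟩, ⟨?_, ?_⟩, ?_, ?_⟩
      · show a ≤ ((e + 1 : ℤ):ℝ) - invGolden * ((M : ℤ) : ℝ)
        push_cast
        linarith
      · show ((e + 1 : ℤ):ℝ) - invGolden * ((M : ℤ) : ℝ) < b
        push_cast
        linarith [hlt_g, hgecast, hwgt]
      · show c ≤ invGolden * ((e + 1 : ℤ):ℝ) + ((M : ℤ) : ℝ)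
        have hAg : invGolden * (g:ℝ) = invGolden * ((e:ℝ) + 1) := by rw [hgecast]
        push_cast
        linarith [hglt, hAg, hh1]
      · show invGolden * ((e + 1 : ℤ):ℝ) + ((M : ℤ) : ℝ) < d
        push_cast
        linarith [hM, hh1, hAlt1]

lemma hστ_one : (1 - invGolden) * (2 + invGolden) = 1 := by
  linear_combination (-1 : ℝ) * ig_sq

lemma hone (j : ℕ) : (1 - invGolden) ^ j * (2 + invGolden) ^ j = 1 := by
  rw [← mul_pow, hστ_one, one_pow]


/-- Any axis-parallel half-open rectangle `[a,b) × [c,d)` of area exactly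
`2 + α` contains at least one and at most twelve points of the lattice `Γ`. -/
theorem rect_lattice_point_count (a b c d : ℝ) (hab : a < b) (hcd : c < d)
    (harea : (b - a) * (d - c) = 2 + invGolden) :
    1 ≤ ((Ico a b ×ˢ Ico c d) ∩ Γ).encard ∧
      ((Ico a b ×ˢ Ico c d) ∩ Γ).encard ≤ 12 := by
  have hApos := ig_pos
  have hAlt1 := ig_lt_one
  have hσpos : (0:ℝ) < 1 - invGolden := by linarith
  have hτpos : (0:ℝ) < 2 + invGolden := by linarith
  have hτgt1 : (1:ℝ) < 2 + invGolden := by linarith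
  have hwpos : (0:ℝ) < b - a := by linarith
  rw [encard_eq_idx a b c d]
  obtain ⟨k, hk⟩ := exists_mem_Ico_zpow hwpos hτgt1
  obtain ⟨hk1, hk2⟩ := hk
  obtain ⟨j, hj | hj⟩ := k.eq_nat_or_neg
  · -- k = j ≥ 0 : scale down j times
    subst hj
    have hσj : (0:ℝ) < (1 - invGolden) ^ j := pow_pos hσpos j
    have hτj : (0:ℝ) < (2 + invGolden) ^ j := pow_pos hτpos j
    rw [zpow_natCast] at hk1
    have hcast : ((j:ℤ) + 1) = ((j + 1 : ℕ) : ℤ) := by push_cast; ring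
    rw [hcast, zpow_natCast] at hk2
    rw [idx_iter_up j a b c d]
    have hw1 : 1 ≤ (1 - invGolden) ^ j * b - (1 - invGolden) ^ j * a := by
      have := mul_le_mul_of_nonneg_left hk1 hσj.le
      calc (1:ℝ) = (1 - invGolden) ^ j * (2 + invGolden) ^ j := (hone j).symm
        _ ≤ (1 - invGolden) ^ j * (b - a) := this
        _ = (1 - invGolden) ^ j * b - (1 - invGolden) ^ j * a := by ring
    have hw2 : (1 - invGolden) ^ j * b - (1 - invGolden) ^ j * a < 2 + invGolden := by
      have h' := mul_lt_mul_of_pos_left hk2 hσj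
      calc (1 - invGolden) ^ j * b - (1 - invGolden) ^ j * a
          = (1 - invGolden) ^ j * (b - a) := by ring
        _ < (1 - invGolden) ^ j * (2 + invGolden) ^ (j + 1) := h'
        _ = ((1 - invGolden) ^ j * (2 + invGolden) ^ j) * (2 + invGolden) := by ring
        _ = 2 + invGolden := by rw [hone j, one_mul]
    have hw3 : ((1 - invGolden) ^ j * b - (1 - invGolden) ^ j * a) *
        ((2 + invGolden) ^ j * d - (2 + invGolden) ^ j * c) = 2 + invGolden := by
      calc ((1 - invGolden) ^ j * b - (1 - invGolden) ^ j * a) *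
          ((2 + invGolden) ^ j * d - (2 + invGolden) ^ j * c)
          = ((1 - invGolden) ^ j * (2 + invGolden) ^ j) * ((b - a) * (d - c)) := by ring
        _ = 2 + invGolden := by rw [hone j, harea, one_mul]
    exact ⟨core_lower _ _ _ _ hw1 hw2 hw3, core_upper _ _ _ _ hw1 hw2 hw3⟩
  · -- k = -j : scale up j times
    subst hj
    have hσj : (0:ℝ) < (1 - invGolden) ^ j := pow_pos hσpos j
    have hτj : (0:ℝ) < (2 + invGolden) ^ j := pow_pos hτpos j
    have hτne : (2 + invGolden) ≠ 0 := ne_of_gt hτpos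
    have hneg : ((2 + invGolden):ℝ) ^ (-(j:ℤ)) = (1 - invGolden) ^ j := by
      rw [zpow_neg, zpow_natCast]
      exact (eq_inv_of_mul_eq_one_left (hone j)).symm
    rw [hneg] at hk1
    have hneg1 : ((2 + invGolden):ℝ) ^ (-(j:ℤ) + 1) = (2 + invGolden) * (1 - invGolden) ^ j := by
      rw [zpow_add₀ hτne, hneg, zpow_one, mul_comm]
    rw [hneg1] at hk2
    rw [idx_iter_down j a b c d]
    have hw1 : 1 ≤ (2 + invGolden) ^ j * b - (2 + invGolden) ^ j * a := by
      have := mul_le_mul_of_nonneg_left hk1 hτj.le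
      calc (1:ℝ) = (1 - invGolden) ^ j * (2 + invGolden) ^ j := (hone j).symm
        _ = (2 + invGolden) ^ j * (1 - invGolden) ^ j := by ring
        _ ≤ (2 + invGolden) ^ j * (b - a) := this
        _ = (2 + invGolden) ^ j * b - (2 + invGolden) ^ j * a := by ring
    have hw2 : (2 + invGolden) ^ j * b - (2 + invGolden) ^ j * a < 2 + invGolden := by
      have h' := mul_lt_mul_of_pos_left hk2 hτj
      calc (2 + invGolden) ^ j * b - (2 + invGolden) ^ j * a
          = (2 + invGolden) ^ j * (b - a) := by ring
        _ < (2 + invGolden) ^ j * ((2 + invGolden) * (1 - invGolden) ^ j) := h'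
        _ = ((1 - invGolden) ^ j * (2 + invGolden) ^ j) * (2 + invGolden) := by ring
        _ = 2 + invGolden := by rw [hone j, one_mul]
    have hw3 : ((2 + invGolden) ^ j * b - (2 + invGolden) ^ j * a) *
        ((1 - invGolden) ^ j * d - (1 - invGolden) ^ j * c) = 2 + invGolden := by
      calc ((2 + invGolden) ^ j * b - (2 + invGolden) ^ j * a) *
          ((1 - invGolden) ^ j * d - (1 - invGolden) ^ j * c)
          = ((1 - invGolden) ^ j * (2 + invGolden) ^ j) * ((b - a) * (d - c)) := by ring
        _ = 2 + invGolden := by rw [hone j, harea, one_mul]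
    exact ⟨core_lower _ _ _ _ hw1 hw2 hw3, core_upper _ _ _ _ hw1 hw2 hw3⟩
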